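/- Let P be a program with deterministic small-step semantics and S a standard security context for P, and suppose every maximal trace of P is finite (all runs terminate). Then P and S satisfy termination-insensitive trace confidentiality if and only if the Kripke interpretation of P and S satisfies confidentiality, i.e., for all agents A, worlds w, and temporally sound formulae φ: w ⊨ ◇[K^C_A]φ implies w ⊨ [K^P_A]◇φ. -/

import Mathlib

/-!
Security properties through the lens of modal logic: Kripke interpretations
of deterministic programs with a standard security context.

A program is given by its text, a domain of values for each variable, and a
deterministic small-step semantics, modelled as a partial function `step` on
configurations (`none` meaning that the configuration admits no further step).
Worlds of the Kripke interpretation are the finite traces from valid initial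
stores; by determinism such a trace is represented by its initial store
together with its length.
-/

attribute [local instance] Classical.propDecidable

namespace SecModal

/-- The usual box modality for a relation `R`: `φ` holds at all `R`-successors. -/
def box {W : Type} (R : W → W → Prop) (φ : W → Prop) (w : W) : Prop :=
  ∀ w', R w w' → φ w'

/-- The usual diamond modality for a relation `R`: `φ` holds at some `R`-successor. -/
def dia {W : Type} (R : W → W → Prop) (φ : W → Prop) (w : W) : Prop :=
  ∃ w', R w w' ∧ φ w'

/-- Temporal soundness of a formula `φ` with respect to a time relation `T`:
at every world, `φ` holds iff `□φ` holds. -/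
def TS {W : Type} (T : W → W → Prop) (φ : W → Prop) : Prop :=
  ∀ w, φ w ↔ box T φ w

/-- A store assigns a value to each variable. -/
abbrev Store (Var Val : Type) : Type := Var → Val

/-- A configuration pairs a program text with a store. -/
abbrev Config (Prog Var Val : Type) : Type := Prog × Store Var Val

/-- Restriction of a store to a set of variables `S` (`none` outside `S`). -/
noncomputable def restrict {Var Val : Type} (S : Set Var) (σ : Store Var Val) : Var → Option Val :=
  fun v => if v ∈ S then some (σ v) else none

/-- Destuttering: removal of consecutive duplicate entries of a list. -/
noncomputable def dest {α : Type} (l : List α) : List α :=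
  l.destutter (· ≠ ·)

/-- A program `⟨p, V, I⟩` with deterministic small-step semantics:
`text` is the program text `p`, `dom` assigns to each variable its domain of
values `I(v)`, and `step` is the deterministic small-step transition function. -/
structure Program (Prog Var Val : Type) : Type where
  text : Prog
  dom : Var → Set Val
  step : Config Prog Var Val → Option (Config Prog Var Val)

namespace Program

variable {Prog Var Val Agent : Type}

/-- `n`-fold iteration of the small-step semantics. -/
def iter (P : Program Prog Var Val) : ℕ → Config Prog Var Val → Option (Config Prog Var Val)
  | 0, c => some c
  | n + 1, c => (P.iter n c).bind P.step

/-- The configuration reached after `k` steps from `c` (defaulting to `c` when undefined). -/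
def configAt (P : Program Prog Var Val) (c : Config Prog Var Val) (k : ℕ) :
    Config Prog Var Val :=
  (P.iter k c).getD c

/-- The view, through the variables in `S`, of the trace of length `n` (i.e. with `n + 1`
configurations) starting at `c`: the destuttering of the list of restricted stores. -/
noncomputable def pview (P : Program Prog Var Val) (S : Set Var) (c : Config Prog Var Val)
    (n : ℕ) : List (Var → Option Val) :=
  dest ((List.range (n + 1)).map fun k => restrict S (P.configAt c k).2)

/-- The maximal trace generated from `c` halts. -/
def halts (P : Program Prog Var Val) (c : Config Prog Var Val) : Prop :=
  ∃ n c', P.iter n c = some c' ∧ P.step c' = none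

/-- The maximal trace generated from `c` diverges (is infinite). -/
def diverges (P : Program Prog Var Val) (c : Config Prog Var Val) : Prop :=
  ¬ P.halts c

/-- The (possibly infinite) views through `S` of the maximal traces generated from
`c₁` and `c₂` are equal: every view of a finite prefix of the one is a prefix of a view
of a finite prefix of the other, and vice versa. -/
def mviewEq (P : Program Prog Var Val) (S : Set Var) (c₁ c₂ : Config Prog Var Val) : Prop :=
  (∀ n, (P.iter n c₁).isSome = true →
    ∃ m, (P.iter m c₂).isSome = true ∧ P.pview S c₁ n <+: P.pview S c₂ m) ∧
  (∀ n, (P.iter n c₂).isSome = true →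
    ∃ m, (P.iter m c₁).isSome = true ∧ P.pview S c₂ n <+: P.pview S c₁ m)

/-- A valid initial store: every variable takes a value in its domain. -/
def ValidStore (P : Program Prog Var Val) (σ : Store Var Val) : Prop :=
  ∀ v, σ v ∈ P.dom v

/-- Worlds of the Kripke interpretation of `P`: the finite traces of `P`, represented
by a valid initial store together with a length for which the iterated step is defined
(the trace itself is recovered by determinism of the semantics). -/
structure World (P : Program Prog Var Val) : Type where
  init : Store Var Val
  valid : ∀ v, init v ∈ P.dom v
  len : ℕ
  defined : (P.iter len (P.text, init)).isSome = true

/-- The store at time `k` along the trace `w`. -/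
def World.store {P : Program Prog Var Val} (w : P.World) (k : ℕ) : Store Var Val :=
  (P.configAt (P.text, w.init) k).2

/-- The view of the world (finite trace) `w` through the set of variables `S`. -/
noncomputable def wview (P : Program Prog Var Val) (S : Set Var) (w : P.World) :
    List (Var → Option Val) :=
  P.pview S (P.text, w.init) w.len

/-- The time relation `T` of the Kripke interpretation: `w T w'` iff the trace `w`
is a (non-strict) prefix of the trace `w'`. -/
def Ttime (P : Program Prog Var Val) (w w' : P.World) : Prop :=
  w.init = w'.init ∧ w.len ≤ w'.len

/-- The knowledge relation `K^C_A = K^P_A` of an agent with read set `RA`: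
two worlds are related iff the agent's views of them coincide. -/
def Krel (P : Program Prog Var Val) (RA : Set Var) (w w' : P.World) : Prop :=
  P.wview RA w = P.wview RA w'

/-- The write-capability relation `W^C_A` of an agent with write set `WA`:
two worlds are related iff both are initial (length-1, i.e. 0 steps) traces and
their `fix`-projections (to the complement of `WA`) coincide. -/
def WCrel (P : Program Prog Var Val) (WA : Set Var) (w w' : P.World) : Prop :=
  w.len = 0 ∧ w'.len = 0 ∧ P.wview WAᶜ w = P.wview WAᶜ w'

/-- The write-permission relation `W^P_A` of an agent with write set `WA`:
two worlds are related iff their `fix`-projections coincide. -/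
def WPrel (P : Program Prog Var Val) (WA : Set Var) (w w' : P.World) : Prop :=
  P.wview WAᶜ w = P.wview WAᶜ w'

/-- The halting atom `↓`: the trace `w` has halted, i.e. its last configuration
admits no further step. -/
def halted (P : Program Prog Var Val) (w : P.World) : Prop :=
  P.step (P.configAt (P.text, w.init) w.len) = none

end Program

end SecModal

namespace SecModal

/-- Termination-insensitive trace confidentiality (Def. conf2). -/
def TITraceConf {Prog Var Val Agent : Type} (P : Program Prog Var Val)
    (Rd : Agent → Set Var) : Prop :=
  ∀ (A : Agent) (σ1 σ2 : Store Var Val),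
    P.ValidStore σ1 → P.ValidStore σ2 → (∀ v ∈ Rd A, σ1 v = σ2 v) →
    P.mviewEq (Rd A) (P.text, σ1) (P.text, σ2) ∨
      P.diverges (P.text, σ1) ∨ P.diverges (P.text, σ2)


/-! ### Auxiliary lemmas -/

section DestutterHelpers

variable {α : Type} (R : α → α → Prop) [DecidableRel R]

private lemma dest'_head (a : α) (l : List α) : ∃ t, List.destutter' R a l = a :: t := by
  induction l generalizing a with
  | nil => exact ⟨[], rfl⟩
  | cons b l ih =>
    by_cases h : R a b
    · exact ⟨_, List.destutter'_cons_pos _ h⟩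
    · rw [List.destutter'_cons_neg _ h]
      exact ih a

private lemma dest'_prefix (a : α) (l t : List α) :
    List.destutter' R a l <+: List.destutter' R a (l ++ t) := by
  induction l generalizing a with
  | nil =>
    obtain ⟨u, hu⟩ := dest'_head R a t
    rw [List.nil_append, hu, List.destutter'_nil]
    exact ⟨u, by simp⟩
  | cons b l ih =>
    by_cases h : R a b
    · rw [List.cons_append, List.destutter'_cons_pos _ h, List.destutter'_cons_pos _ h]
      obtain ⟨u, hu⟩ := ih b
      exact ⟨u, by simp [hu]⟩
    · rw [List.cons_append, List.destutter'_cons_neg _ h, List.destutter'_cons_neg _ h]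
      exact ih a

private lemma dest'_append_singleton (a b : α) (l : List α) :
    List.destutter' R a (l ++ [b]) = List.destutter' R a l ∨
      List.destutter' R a (l ++ [b]) = List.destutter' R a l ++ [b] := by
  induction l generalizing a with
  | nil =>
    rw [List.nil_append, List.destutter'_nil, List.destutter'_singleton]
    by_cases h : R a b
    · right; simp [h]
    · left; simp [h]
  | cons c l ih =>
    by_cases h : R a c
    · rw [List.cons_append, List.destutter'_cons_pos _ h, List.destutter'_cons_pos _ h]
      rcases ih c with h' | h'
      · left; rw [h']
      · right; rw [h', List.cons_append]
    · rw [List.cons_append, List.destutter'_cons_neg _ h, List.destutter'_cons_neg _ h]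
      exact ih a

end DestutterHelpers

private lemma nat_ivt (g : ℕ → ℕ) (hmono : ∀ {m n : ℕ}, m ≤ n → g m ≤ g n)
    (hstep : ∀ n, g (n + 1) ≤ g n + 1) :
    ∀ N t, g 0 ≤ t → t ≤ g N → ∃ m, m ≤ N ∧ g m = t := by
  intro N
  induction N with
  | zero => exact fun t h1 h2 => ⟨0, le_refl _, le_antisymm h1 h2⟩
  | succ N ih =>
    intro t h1 h2
    by_cases h : t ≤ g N
    · obtain ⟨m, hm, he⟩ := ih t h1 h
      exact ⟨m, hm.trans (Nat.le_succ N), he⟩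
    · push_neg at h
      have hs := hstep N
      exact ⟨N + 1, le_refl _, le_antisymm (by omega) h2⟩

lemma restrict_eq_of_agree {Var Val : Type} (S : Set Var) {σ1 σ2 : Store Var Val}
    (h : ∀ v ∈ S, σ1 v = σ2 v) : restrict S σ1 = restrict S σ2 := by
  funext v
  unfold restrict
  by_cases hv : v ∈ S <;> simp [hv]
  exact h v hv

lemma agree_of_restrict_eq {Var Val : Type} (S : Set Var) {σ1 σ2 : Store Var Val}
    (h : restrict S σ1 = restrict S σ2) : ∀ v ∈ S, σ1 v = σ2 v := by
  intro v hv
  have := congrFun h v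
  simpa [restrict, hv] using this

namespace Program

variable {Prog Var Val : Type} (P : Program Prog Var Val)

lemma iter_zero (c : Config Prog Var Val) : P.iter 0 c = some c := rfl

lemma iter_succ (n : ℕ) (c : Config Prog Var Val) :
    P.iter (n + 1) c = (P.iter n c).bind P.step := rfl

lemma isSome_of_succ {n : ℕ} {c : Config Prog Var Val}
    (h : (P.iter (n + 1) c).isSome) : (P.iter n c).isSome := by
  rw [iter_succ] at h
  cases hx : P.iter n c with
  | none => rw [hx] at h; simp at h
  | some _ => simp

lemma isSome_mono {c : Config Prog Var Val} {m n : ℕ} (hmn : m ≤ n)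
    (h : (P.iter n c).isSome) : (P.iter m c).isSome := by
  induction n with
  | zero =>
    obtain rfl : m = 0 := Nat.le_zero.mp hmn
    exact h
  | succ n ih =>
    rcases Nat.lt_or_ge m (n + 1) with h' | h'
    · exact ih (Nat.lt_succ_iff.mp h') (P.isSome_of_succ h)
    · obtain rfl : m = n + 1 := le_antisymm hmn h'
      exact h

lemma maxlen {c cN : Config Prog Var Val} {N : ℕ}
    (hN : P.iter N c = some cN) (hs : P.step cN = none) :
    ∀ n, (P.iter n c).isSome → n ≤ N := by
  intro n hn
  by_contra h
  push_neg at h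
  have h1 : (P.iter (N + 1) c).isSome := P.isSome_mono h hn
  rw [iter_succ, hN] at h1
  simp [hs] at h1

lemma configAt_zero (c : Config Prog Var Val) : P.configAt c 0 = c := rfl

lemma pview_head (S : Set Var) (c : Config Prog Var Val) (n : ℕ) :
    ∃ t, P.pview S c n = restrict S c.2 :: t := by
  unfold pview dest
  rw [List.range_succ_eq_map, List.map_cons, List.destutter_cons']
  rw [P.configAt_zero c]
  exact dest'_head _ _ _

lemma pview_mono (S : Set Var) (c : Config Prog Var Val) {n m : ℕ} (h : n ≤ m) :
    P.pview S c n <+: P.pview S c m := by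
  have hr : List.range (n + 1) <+: List.range (m + 1) := by
    have ht : List.take (n + 1) (List.range (m + 1)) = List.range (min (n + 1) (m + 1)) := List.take_range
    rw [min_eq_left (by omega)] at ht
    rw [← ht]
    exact List.take_prefix _ _
  obtain ⟨t, ht⟩ := hr
  unfold pview dest
  rw [← ht, List.map_append, List.range_succ_eq_map, List.map_cons, List.cons_append,
    List.destutter_cons', List.destutter_cons']
  exact dest'_prefix _ _ _ _

lemma pview_length_succ (S : Set Var) (c : Config Prog Var Val) (n : ℕ) :
    (P.pview S c (n + 1)).length ≤ (P.pview S c n).length + 1 := by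
  unfold pview dest
  rw [show List.range (n + 1 + 1) = List.range (n + 1) ++ [n + 1] from List.range_succ]
  rw [List.map_append, List.range_succ_eq_map, List.map_cons, List.cons_append,
    List.destutter_cons', List.destutter_cons', List.map_singleton]
  rcases dest'_append_singleton (fun a b : Var → Option Val => a ≠ b) _ _ _ with h | h
  · rw [h]; omega
  · rw [h]; simp

lemma pview_zero (S : Set Var) (c : Config Prog Var Val) :
    P.pview S c 0 = [restrict S c.2] := by
  unfold pview dest
  rw [show List.range (0 + 1) = [0] from rfl, List.map_singleton, List.destutter_singleton, P.configAt_zero c]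

end Program

/-- From termination-insensitive trace confidentiality, the views of the maximal
(halting) traces from two initial stores that agree on the readable variables coincide. -/
lemma maxview_eq_of_conf {Prog Var Val Agent : Type} (P : Program Prog Var Val)
    (Rd : Agent → Set Var) (hconf : TITraceConf P Rd) (A : Agent)
    {σ1 σ2 : Store Var Val} {N1 N2 : ℕ} {c1 c2 : Config Prog Var Val}
    (h1 : P.ValidStore σ1) (h2 : P.ValidStore σ2) (hagree : ∀ v ∈ Rd A, σ1 v = σ2 v)
    (hN1 : P.iter N1 (P.text, σ1) = some c1) (hs1 : P.step c1 = none)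
    (hN2 : P.iter N2 (P.text, σ2) = some c2) (hs2 : P.step c2 = none) :
    P.pview (Rd A) (P.text, σ1) N1 = P.pview (Rd A) (P.text, σ2) N2 := by
  rcases hconf A σ1 σ2 h1 h2 hagree with hm | hd | hd
  · obtain ⟨f, b⟩ := hm
    have hx1 : (P.iter N1 (P.text, σ1)).isSome := by rw [hN1]; rfl
    have hx2 : (P.iter N2 (P.text, σ2)).isSome := by rw [hN2]; rfl
    obtain ⟨m, hms, hp⟩ := f N1 hx1
    have hp1 : P.pview (Rd A) (P.text, σ1) N1 <+: P.pview (Rd A) (P.text, σ2) N2 :=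
      hp.trans (P.pview_mono _ _ (P.maxlen hN2 hs2 m hms))
    obtain ⟨m', hms', hp'⟩ := b N2 hx2
    have hp2 : P.pview (Rd A) (P.text, σ2) N2 <+: P.pview (Rd A) (P.text, σ1) N1 :=
      hp'.trans (P.pview_mono _ _ (P.maxlen hN1 hs1 m' hms'))
    exact hp1.eq_of_length (le_antisymm hp1.length_le hp2.length_le)
  · exact absurd ⟨N1, c1, hN1, hs1⟩ hd
  · exact absurd ⟨N2, c2, hN2, hs2⟩ hd

/-- Conversely, if the views of the maximal traces coincide, the (possibly infinite)
views are equal in the sense of `mviewEq`. -/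
lemma mviewEq_of_maxview {Prog Var Val : Type} (P : Program Prog Var Val) (S : Set Var)
    {c₁ c₂ : Config Prog Var Val} {N1 N2 : ℕ} {d1 d2 : Config Prog Var Val}
    (hN1 : P.iter N1 c₁ = some d1) (hs1 : P.step d1 = none)
    (hN2 : P.iter N2 c₂ = some d2) (hs2 : P.step d2 = none)
    (hmax : P.pview S c₁ N1 = P.pview S c₂ N2) : P.mviewEq S c₁ c₂ := by
  constructor
  · intro n hn
    refine ⟨N2, by rw [hN2]; rfl, ?_⟩
    have h := P.pview_mono S c₁ (P.maxlen hN1 hs1 n hn)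
    rwa [hmax] at h
  · intro n hn
    refine ⟨N1, by rw [hN1]; rfl, ?_⟩
    have h := P.pview_mono S c₂ (P.maxlen hN2 hs2 n hn)
    rwa [← hmax] at h

/-- If every maximal trace of `P` is finite (all runs terminate), then
`P` and `S` satisfy termination-insensitive trace confidentiality iff the Kripke
interpretation of `P` and `S` satisfies (termination-sensitive) confidentiality:
for all agents `A`, worlds `w`, and temporally sound `φ`, `w ⊨ ◇[K^C_A]φ` implies
`w ⊨ [K^P_A]◇φ`. -/
theorem stmt_5 {Prog Var Val Agent : Type} (P : Program Prog Var Val)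
    (Rd : Agent → Set Var)
    (hterm : ∀ σ : Store Var Val, P.ValidStore σ → P.halts (P.text, σ)) :
    TITraceConf P Rd ↔
      (∀ (A : Agent) (w : P.World) (φ : P.World → Prop), TS P.Ttime φ →
        dia P.Ttime (box (P.Krel (Rd A)) φ) w →
        box (P.Krel (Rd A)) (dia P.Ttime φ) w) := by
  constructor
  · -- trace confidentiality implies Kripke confidentiality
    intro hconf A w φ hTS hdia
    intro w₂ hK
    obtain ⟨w', ⟨hinit, _⟩, hbox⟩ := hdia
    obtain ⟨N1, c1, hN1, hs1⟩ := hterm w.init w.valid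
    obtain ⟨N2, c2, hN2, hs2⟩ := hterm w₂.init w₂.valid
    -- the initial stores agree on the readable variables
    have hagree : ∀ v ∈ Rd A, w.init v = w₂.init v := by
      obtain ⟨t1, ht1⟩ := P.pview_head (Rd A) (P.text, w.init) w.len
      obtain ⟨t2, ht2⟩ := P.pview_head (Rd A) (P.text, w₂.init) w₂.len
      have hh : restrict (Rd A) w.init :: t1 = restrict (Rd A) w₂.init :: t2 := by
        rw [← ht1, ← ht2]; exact hK
      injection hh with hh _
      exact agree_of_restrict_eq _ hh
    have hmax := maxview_eq_of_conf P Rd hconf A w.valid w₂.valid hagree hN1 hs1 hN2 hs2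
    have hN1' : P.iter N1 (P.text, w'.init) = some c1 := by rw [← hinit]; exact hN1
    have hwlen' : w'.len ≤ N1 := P.maxlen hN1' hs1 w'.len w'.defined
    have hpre : P.pview (Rd A) (P.text, w.init) w'.len <+:
        P.pview (Rd A) (P.text, w₂.init) N2 := by
      have h := P.pview_mono (Rd A) (P.text, w.init) hwlen'
      rwa [hmax] at h
    obtain ⟨t0, ht0⟩ := P.pview_head (Rd A) (P.text, w.init) w'.len
    have hlen1 : 1 ≤ (P.pview (Rd A) (P.text, w.init) w'.len).length := by
      rw [ht0]; simp
    have hg0 : (P.pview (Rd A) (P.text, w₂.init) 0).length = 1 := by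
      rw [P.pview_zero]; rfl
    obtain ⟨m, hmN2, hgm⟩ :=
      nat_ivt (fun m => (P.pview (Rd A) (P.text, w₂.init) m).length)
        (fun h => (P.pview_mono _ _ h).length_le)
        (fun n => P.pview_length_succ _ _ n) N2
        (P.pview (Rd A) (P.text, w.init) w'.len).length
        (by show (P.pview (Rd A) (P.text, w₂.init) 0).length ≤ _; rw [hg0]; exact hlen1)
        hpre.length_le
    have heq : P.pview (Rd A) (P.text, w₂.init) m =
        P.pview (Rd A) (P.text, w.init) w'.len := by
      have hq : P.pview (Rd A) (P.text, w₂.init) m <+: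
          P.pview (Rd A) (P.text, w₂.init) N2 := P.pview_mono _ _ hmN2
      exact (List.prefix_of_prefix_length_le hq hpre (le_of_eq hgm)).eq_of_length hgm
    have hdef2 : (P.iter N2 (P.text, w₂.init)).isSome := by rw [hN2]; rfl
    have hφ : φ ⟨w₂.init, w₂.valid, m, P.isSome_mono hmN2 hdef2⟩ := by
      apply hbox
      show P.pview (Rd A) (P.text, w'.init) w'.len = P.pview (Rd A) (P.text, w₂.init) m
      rw [← hinit, heq]
    have hφmax : φ ⟨w₂.init, w₂.valid, N2, hdef2⟩ :=
      (hTS _).mp hφ _ ⟨rfl, hmN2⟩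
    exact ⟨⟨w₂.init, w₂.valid, N2, hdef2⟩, ⟨rfl, P.maxlen hN2 hs2 w₂.len w₂.defined⟩, hφmax⟩
  · -- Kripke confidentiality implies trace confidentiality
    intro hk A σ1 σ2 h1 h2 hagree
    obtain ⟨N1, c1, hN1, hs1⟩ := hterm σ1 h1
    obtain ⟨N2, c2, hN2, hs2⟩ := hterm σ2 h2
    have key : ∀ (σa σb : Store Var Val), P.ValidStore σa → P.ValidStore σb →
        (∀ v ∈ Rd A, σa v = σb v) →
        ∀ (Na : ℕ) (ca : Config Prog Var Val) (Nb : ℕ) (cb : Config Prog Var Val),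
          P.iter Na (P.text, σa) = some ca → P.step ca = none →
          P.iter Nb (P.text, σb) = some cb → P.step cb = none →
          P.pview (Rd A) (P.text, σa) Na <+: P.pview (Rd A) (P.text, σb) Nb := by
      intro σa σb ha hb hab Na ca Nb cb hNa hsa hNb hsb
      set φ : P.World → Prop := fun u => ∀ (M : ℕ) (cM : Config Prog Var Val),
        P.iter M (P.text, u.init) = some cM → P.step cM = none →
        P.pview (Rd A) (P.text, σa) Na <+: P.pview (Rd A) (P.text, u.init) M with hφdef
      have hTS : TS P.Ttime φ := by
        intro u
        constructor
        · intro h u' hT M cM hM hsM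
          obtain ⟨hi, _⟩ := hT
          rw [← hi] at hM ⊢
          exact h M cM hM hsM
        · intro h
          exact h u ⟨rfl, le_refl _⟩
      have hdefa : (P.iter Na (P.text, σa)).isSome := by rw [hNa]; rfl
      have hdia : dia P.Ttime (box (P.Krel (Rd A)) φ) ⟨σa, ha, 0, rfl⟩ := by
        refine ⟨⟨σa, ha, Na, hdefa⟩, ⟨rfl, Nat.zero_le _⟩, ?_⟩
        intro u hu M cM hM hsM
        have hv : P.pview (Rd A) (P.text, σa) Na = P.pview (Rd A) (P.text, u.init) u.len := hu
        rw [hv]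
        exact P.pview_mono _ _ (P.maxlen hM hsM u.len u.defined)
      have hbox := hk A ⟨σa, ha, 0, rfl⟩ φ hTS hdia
      have hKr : P.Krel (Rd A) ⟨σa, ha, 0, rfl⟩ ⟨σb, hb, 0, rfl⟩ := by
        show P.pview (Rd A) (P.text, σa) 0 = P.pview (Rd A) (P.text, σb) 0
        rw [P.pview_zero, P.pview_zero]
        have : restrict (Rd A) σa = restrict (Rd A) σb := restrict_eq_of_agree _ hab
        exact congrArg (fun x => [x]) this
      obtain ⟨w', ⟨hi, _⟩, hφ'⟩ := hbox ⟨σb, hb, 0, rfl⟩ hKr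
      have hNb' : P.iter Nb (P.text, w'.init) = some cb := by rw [← hi]; exact hNb
      have hres := hφ' Nb cb hNb' hsb
      rw [← hi] at hres
      exact hres
    have hp12 := key σ1 σ2 h1 h2 hagree N1 c1 N2 c2 hN1 hs1 hN2 hs2
    have hp21 := key σ2 σ1 h2 h1 (fun v hv => (hagree v hv).symm) N2 c2 N1 c1 hN2 hs2 hN1 hs1
    have hmax := hp12.eq_of_length (le_antisymm hp12.length_le hp21.length_le)
    exact Or.inl (mviewEq_of_maxview P (Rd A) hN1 hs1 hN2 hs2 hmax)

end SecModal
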